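/- Let (A_n) be the anti-recurrence sequence for the linear form a = (1,2) (the anti-Pell numbers, OEIS A304502). Then 0 ≤ A_n - 7n + 3 ≤ 2 for all n ≥ 1. -/
import Mathlib


/-- `A` and `B` (indexed from 1) are complementary strictly increasing sequences
of positive integers: every positive integer lies in exactly one of their ranges. -/
def CompPair (A B : ℕ → ℕ) : Prop :=
  StrictMonoOn A (Set.Ici 1) ∧ StrictMonoOn B (Set.Ici 1) ∧
  (∀ n, 1 ≤ n → 1 ≤ A n) ∧ (∀ n, 1 ≤ n → 1 ≤ B n) ∧
  ∀ m, 1 ≤ m →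
    ((∃ n, 1 ≤ n ∧ A n = m) ∧ ¬(∃ n, 1 ≤ n ∧ B n = m)) ∨
    (¬(∃ n, 1 ≤ n ∧ A n = m) ∧ (∃ n, 1 ≤ n ∧ B n = m))

/-- `(A, B)` is the anti-recurrence pair for the positive linear form `a` of dimension `k`:
`A n = Σ_{j=1}^k a_j * B_{(n-1)k+j}` for all `n ≥ 1`. -/
def AntiRec (k : ℕ) (a : Fin k → ℕ) (A B : ℕ → ℕ) : Prop :=
  CompPair A B ∧
  ∀ n, 1 ≤ n → A n = ∑ j : Fin k, a j * B ((n - 1) * k + (j : ℕ) + 1)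

namespace Stmt3Aux

variable {A B : ℕ → ℕ}

lemma self_le (hmono : StrictMonoOn A (Set.Ici 1)) (hpos : ∀ n, 1 ≤ n → 1 ≤ A n) :
    ∀ n, 1 ≤ n → n ≤ A n := by
  intro n hn
  induction n with
  | zero => omega
  | succ k ih =>
    rcases Nat.lt_or_ge 1 (k + 1) with h | h
    · have hk : 1 ≤ k := by omega
      have h1 := ih hk
      have h2 := hmono (Set.mem_Ici.mpr hk) (Set.mem_Ici.mpr (by omega : (1:ℕ) ≤ k + 1))
        (by omega)
      omega
    · have := hpos (k + 1) hn
      omega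

lemma lt_of_apply_lt (hmono : StrictMonoOn A (Set.Ici 1)) (k n : ℕ)
    (hk : 1 ≤ k) (hn : 1 ≤ n) (h : A k < A n) : k < n := by
  by_contra hc
  push_neg at hc
  have := hmono.monotoneOn (Set.mem_Ici.mpr hn) (Set.mem_Ici.mpr hk) hc
  omega

lemma count_sum (hAm : StrictMonoOn A (Set.Ici 1)) (hBm : StrictMonoOn B (Set.Ici 1))
    (hApos : ∀ n, 1 ≤ n → 1 ≤ A n) (hBpos : ∀ n, 1 ≤ n → 1 ≤ B n)
    (hcomp : ∀ m, 1 ≤ m →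
      ((∃ n, 1 ≤ n ∧ A n = m) ∧ ¬(∃ n, 1 ≤ n ∧ B n = m)) ∨
      (¬(∃ n, 1 ≤ n ∧ A n = m) ∧ (∃ n, 1 ≤ n ∧ B n = m))) (y : ℕ) :
    ((Finset.Icc 1 y).filter (fun k => A k ≤ y)).card
      + ((Finset.Icc 1 y).filter (fun k => B k ≤ y)).card = y := by
  classical
  have himg : ∀ (C : ℕ → ℕ), StrictMonoOn C (Set.Ici 1) → (∀ n, 1 ≤ n → 1 ≤ C n) →
      ((Finset.Icc 1 y).filter (fun k => C k ≤ y)).card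
        = ((Finset.Icc 1 y).filter (fun i => ∃ k, 1 ≤ k ∧ C k = i)).card := by
    intro C hm hp
    have hinj : Set.InjOn C ((Finset.Icc 1 y).filter (fun k => C k ≤ y) : Finset ℕ) := by
      intro a ha b hb hab
      simp only [Finset.coe_filter, Set.mem_setOf_eq, Finset.mem_Icc] at ha hb
      exact hm.injOn (Set.mem_Ici.mpr ha.1.1) (Set.mem_Ici.mpr hb.1.1) hab
    have himgeq : Finset.image C ((Finset.Icc 1 y).filter (fun k => C k ≤ y))
        = (Finset.Icc 1 y).filter (fun i => ∃ k, 1 ≤ k ∧ C k = i) := by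
      ext i
      simp only [Finset.mem_image, Finset.mem_filter, Finset.mem_Icc]
      constructor
      · rintro ⟨k, ⟨⟨hk1, _⟩, hCk⟩, rfl⟩
        exact ⟨⟨hp k hk1, hCk⟩, k, hk1, rfl⟩
      · rintro ⟨⟨hi1, hiy⟩, k, hk1, rfl⟩
        exact ⟨k, ⟨⟨hk1, le_trans (self_le hm hp k hk1) hiy⟩, hiy⟩, rfl⟩
    calc ((Finset.Icc 1 y).filter (fun k => C k ≤ y)).card
        = (Finset.image C ((Finset.Icc 1 y).filter (fun k => C k ≤ y))).card :=
          (Finset.card_image_of_injOn hinj).symm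
      _ = ((Finset.Icc 1 y).filter (fun i => ∃ k, 1 ≤ k ∧ C k = i)).card := by
          rw [himgeq]
  rw [himg A hAm hApos, himg B hBm hBpos]
  have hneg : (Finset.Icc 1 y).filter (fun i => ∃ k, 1 ≤ k ∧ B k = i)
      = (Finset.Icc 1 y).filter (fun i => ¬ ∃ k, 1 ≤ k ∧ A k = i) := by
    apply Finset.filter_congr
    intro i hi
    simp only [Finset.mem_Icc] at hi
    rcases hcomp i hi.1 with ⟨hA1, hB1⟩ | ⟨hA1, hB1⟩
    · constructor
      · intro hB; exact absurd hB hB1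
      · intro hA; exact absurd hA1 hA
    · constructor
      · intro _; exact hA1
      · intro _; exact hB1
  rw [hneg, Finset.card_filter_add_card_filter_not, Nat.card_Icc]
  omega

lemma filter_B_card (hBm : StrictMonoOn B (Set.Ici 1)) (hBpos : ∀ n, 1 ≤ n → 1 ≤ B n)
    (m : ℕ) (hm : 1 ≤ m) :
    ((Finset.Icc 1 (B m)).filter (fun k => B k ≤ B m)).card = m := by
  have hfe : (Finset.Icc 1 (B m)).filter (fun k => B k ≤ B m) = Finset.Icc 1 m := by
    ext k
    simp only [Finset.mem_filter, Finset.mem_Icc]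
    constructor
    · rintro ⟨⟨hk1, _⟩, hbk⟩
      refine ⟨hk1, ?_⟩
      by_contra hc
      push_neg at hc
      have := hBm (Set.mem_Ici.mpr hm) (Set.mem_Ici.mpr hk1) hc
      omega
    · rintro ⟨hk1, hkm⟩
      have h1 : B k ≤ B m := hBm.monotoneOn (Set.mem_Ici.mpr hk1) (Set.mem_Ici.mpr hm) hkm
      have h2 := self_le hBm hBpos k hk1
      exact ⟨⟨hk1, le_trans h2 h1⟩, h1⟩
  rw [hfe, Nat.card_Icc]
  omega

end Stmt3Aux

open Stmt3Aux in
/-- Kimberling's bounds on the anti-Pell numbers: 0 ≤ A n - 7n + 3 ≤ 2. -/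
theorem stmt3 (A B : ℕ → ℕ) (h : AntiRec 2 ![1, 2] A B) :
    ∀ n, 1 ≤ n → 0 ≤ (A n : ℤ) - 7 * n + 3 ∧ (A n : ℤ) - 7 * n + 3 ≤ 2 := by
  classical
  obtain ⟨⟨hAm, hBm, hApos, hBpos, hcomp⟩, hrec⟩ := h
  have hrec' : ∀ n, 1 ≤ n → A n = B (2 * n - 1) + 2 * B (2 * n) := by
    intro n hn
    have e := hrec n hn
    rw [Fin.sum_univ_two] at e
    simp only [Matrix.cons_val_zero, Matrix.cons_val_one, Matrix.head_cons,
      Fin.val_zero, Fin.val_one, one_mul] at e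
    have e2 : (n - 1) * 2 + 1 + 1 = 2 * n := by omega
    rw [e2] at e
    have e1 : (n - 1) * 2 + 0 + 1 = 2 * n - 1 := by omega
    rw [e1] at e
    exact e
  have main : ∀ n, 1 ≤ n → 7 * n ≤ A n + 3 ∧ A n + 1 ≤ 7 * n := by
    intro n
    induction n using Nat.strong_induction_on with
    | _ n IH =>
    intro hn
    have hm1 : 1 ≤ 2 * n - 1 := by omega
    have hm2 : 1 ≤ 2 * n := by omega
    have hAe := hrec' n hn
    have hB2pos := hBpos _ hm2
    have hB1pos := hBpos _ hm1
    have hlt2 : B (2 * n) < A n := by omega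
    have hlt1 : B (2 * n - 1) < A n := by omega
    have key : ∀ m, 1 ≤ m → B m < A n →
        ((Finset.Icc 1 (B m)).filter (fun k => A k ≤ B m)).card + m = B m := by
      intro m hm hmlt
      have h1 := count_sum hAm hBm hApos hBpos hcomp (B m)
      have h2 := filter_B_card hBm hBpos m hm
      omega
    have hupper : ∀ m, 1 ≤ m → B m < A n → 6 * B m ≤ 7 * m + 2 := by
      intro m hm hmlt
      have hkey := key m hm hmlt
      have hnotA : ¬ ∃ k, 1 ≤ k ∧ A k = B m := by
        rcases hcomp (B m) (hBpos m hm) with ⟨_, hB1⟩ | ⟨hA1, _⟩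
        · exact absurd ⟨m, hm, rfl⟩ hB1
        · exact hA1
      have hsub : (Finset.Icc 1 (B m)).filter (fun k => A k ≤ B m)
          ⊆ Finset.Icc 1 ((B m + 2) / 7) := by
        intro k hk
        simp only [Finset.mem_filter, Finset.mem_Icc] at hk ⊢
        obtain ⟨⟨hk1, _⟩, hAk⟩ := hk
        have hkn : k < n := lt_of_apply_lt hAm k n hk1 hn (lt_of_le_of_lt hAk hmlt)
        have hIH := (IH k hkn hk1).1
        have hne : A k ≠ B m := fun he => hnotA ⟨k, hk1, he⟩
        omega
      have hcard := Finset.card_le_card hsub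
      rw [Nat.card_Icc] at hcard
      omega
    have hu2 := hupper (2 * n) hm2 hlt2
    have hu1 := hupper (2 * n - 1) hm1 hlt1
    have hB12 : B (2 * n - 1) ≤ B (2 * n) :=
      hBm.monotoneOn (Set.mem_Ici.mpr hm1) (Set.mem_Ici.mpr hm2) (by omega)
    have hlower : ∀ m, 1 ≤ m → B m < A n → B m ≤ B (2 * n) → 7 * m ≤ 6 * B m + 5 := by
      intro m hm hmlt hmB
      have hkey := key m hm hmlt
      have hsub : Finset.Icc 1 ((B m + 1) / 7)
          ⊆ (Finset.Icc 1 (B m)).filter (fun k => A k ≤ B m) := by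
        intro k hk
        simp only [Finset.mem_filter, Finset.mem_Icc] at hk ⊢
        obtain ⟨hk1, hk7⟩ := hk
        have h7 : 7 * k ≤ B m + 1 := by omega
        have hkn : k < n := by omega
        have hIH := (IH k hkn hk1).2
        have hAk : A k ≤ B m := by omega
        exact ⟨⟨hk1, le_trans (self_le hAm hApos k hk1) hAk⟩, hAk⟩
      have hcard := Finset.card_le_card hsub
      rw [Nat.card_Icc] at hcard
      omega
    have hl2 := hlower (2 * n) hm2 hlt2 le_rfl
    have hl1 := hlower (2 * n - 1) hm1 hlt1 hB12
    constructor <;> omega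
  intro n hn
  have := main n hn
  omega
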